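/- arXiv:1804.04724 — 3 statements merged into one kernel-verified Lean document; each statement's English description precedes it below -/
import Mathlib

section
/- The digraph associated to a lattice diagram has no directed cycles if and only if it has no directed 4-cycles. -/
/-- A lattice diagram: a subgraph of the grid graph on `ℤ²` (adjacency only
between lattice points at distance 1) in which every vertex incident to an
edge has degree 2 or 4, together with over/under information at each
degree-4 vertex (crossing): `horizOver v = true` means the horizontal strand
through `v` is the overstrand. -/
structure LatticeDiagram where
  Adj : (ℤ × ℤ) → (ℤ × ℤ) → Prop
  symm : ∀ p q, Adj p q → Adj q p
  unit : ∀ p q, Adj p q → (p.1 - q.1) ^ 2 + (p.2 - q.2) ^ 2 = 1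
  deg : ∀ p q, Adj p q → {r | Adj p r}.ncard = 2 ∨ {r | Adj p r}.ncard = 4
  horizOver : (ℤ × ℤ) → Bool

/-- A crossing of a lattice diagram: a vertex of degree 4. -/
def LatticeDiagram.IsCrossing (D : LatticeDiagram) (v : ℤ × ℤ) : Prop :=
  {r | D.Adj v r}.ncard = 4

/-- The edge of `D` from `v` to `p` is an understrand at the crossing `v`. -/
def LatticeDiagram.UnderAt (D : LatticeDiagram) (v p : ℤ × ℤ) : Prop :=
  D.Adj v p ∧ ((p.2 = v.2 ∧ D.horizOver v = false) ∨ (p.1 = v.1 ∧ D.horizOver v = true))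

/-- The edge of `D` from `v` to `p` is an overstrand at the crossing `v`. -/
def LatticeDiagram.OverAt (D : LatticeDiagram) (v p : ℤ × ℤ) : Prop :=
  D.Adj v p ∧ ((p.2 = v.2 ∧ D.horizOver v = true) ∨ (p.1 = v.1 ∧ D.horizOver v = false))

/-- The associated digraph `Γ` of a lattice diagram `D`: its vertices are the
edges of `D` (as unordered pairs), with a directed edge `e → f` whenever `e`
and `f` meet at a crossing `v` of `D` with `e` the understrand and `f` the
overstrand at `v`. -/
def GammaEdge (D : LatticeDiagram) (e f : Sym2 (ℤ × ℤ)) : Prop :=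
  ∃ v p q : ℤ × ℤ, D.IsCrossing v ∧ D.UnderAt v p ∧ D.OverAt v q ∧
    e = s(v, p) ∧ f = s(v, q)

/-- A directed cycle: a nonempty cyclic sequence of distinct vertices each
joined to the next by a directed edge. -/
def HasDirectedCycle {V : Type*} (E : V → V → Prop) : Prop :=
  ∃ (n : ℕ) (c : Fin (n + 1) → V), Function.Injective c ∧ ∀ i, E (c i) (c (i + 1))

/-- A directed 4-cycle. -/
def Has4Cycle {V : Type*} (E : V → V → Prop) : Prop :=
  ∃ c : Fin 4 → V, Function.Injective c ∧ ∀ i, E (c i) (c (i + 1))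

/-- An Escher square in a lattice diagram: a unit 4-cycle `v₁v₂v₃v₄` of edges
of `D` such that, up to reversing all four crossings, every edge `vᵢvᵢ₊₁` is
an understrand at `vᵢ` and an overstrand at `vᵢ₊₁` (indices mod 4). -/
def EscherSquare (D : LatticeDiagram) : Prop :=
  ∃ v : Fin 4 → ℤ × ℤ, Function.Injective v ∧ (∀ i, D.Adj (v i) (v (i + 1))) ∧
    ((∀ i, D.UnderAt (v i) (v (i + 1)) ∧ D.OverAt (v (i + 1)) (v i)) ∨
     (∀ i, D.OverAt (v i) (v (i + 1)) ∧ D.UnderAt (v (i + 1)) (v i)))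

/-- A lattice link: a subgraph of the grid graph on `ℤ³ = (ℤ × ℤ) × ℤ`
(adjacency only between lattice points at distance 1) in which every vertex
incident to an edge has degree exactly 2, i.e. a disjoint union of cycles.
A point is recorded as `(xy, z)` with `xy : ℤ × ℤ` its projection and `z` its
height; the projection `π` is `(xy, z) ↦ xy`. -/
structure LatticeLink where
  Adj : ((ℤ × ℤ) × ℤ) → ((ℤ × ℤ) × ℤ) → Prop
  symm : ∀ p q, Adj p q → Adj q p
  unit : ∀ p q, Adj p q →
    (p.1.1 - q.1.1) ^ 2 + (p.1.2 - q.1.2) ^ 2 + (p.2 - q.2) ^ 2 = 1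
  deg2 : ∀ p q, Adj p q → {r | Adj p r}.ncard = 2

/-- A point of `ℤ³` lying on the link `L`. -/
def LatticeLink.Vtx (L : LatticeLink) (p : (ℤ × ℤ) × ℤ) : Prop := ∃ q, L.Adj p q

/-- Two heights `h, h'` lie in the same connected component of the preimage
`π⁻¹(v) ∩ L` of the vertex `v` of the diagram. -/
def FiberConn (L : LatticeLink) (v : ℤ × ℤ) (h h' : ℤ) : Prop :=
  Relation.ReflTransGen (fun a b => L.Adj (v, a) (v, b)) h h'

/-- `L` realizes `D` as in Definition 1.1: `π(L) = D`, the preimage of (the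
interior of) each edge of `D` is a single edge of `L` at a single height, the
preimage of each degree-2 vertex is connected, and the preimage of each
crossing has exactly two connected components, each point of the higher
component lying strictly above each point of the lower one, with the higher
component attached to the lifts of the two overstrands and the lower one to
the lifts of the two understrands. -/
def Realizes (D : LatticeDiagram) (L : LatticeLink) : Prop :=
  -- every edge of L is vertical (over a vertex of D) or projects to an edge of D
  (∀ p q, L.Adj p q → (p.1 = q.1 ∧ ∃ r, D.Adj p.1 r) ∨ D.Adj p.1 q.1) ∧
  -- each edge of D has exactly one lift
  (∀ a b, D.Adj a b → ∃! h : ℤ, L.Adj (a, h) (b, h)) ∧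
  -- the preimage of a degree-2 vertex is connected
  (∀ v : ℤ × ℤ, (∃ r, D.Adj v r) → ¬ D.IsCrossing v →
    ∀ h h', L.Vtx (v, h) → L.Vtx (v, h') → FiberConn L v h h') ∧
  -- the preimage of a crossing has exactly two components, the higher one
  -- attached to the lifts of the overstrands
  (∀ v : ℤ × ℤ, D.IsCrossing v → ∃ hu ho : ℤ,
    L.Vtx (v, hu) ∧ L.Vtx (v, ho) ∧ ¬ FiberConn L v hu ho ∧
    (∀ h, L.Vtx (v, h) → FiberConn L v h hu ∨ FiberConn L v h ho) ∧
    (∀ h h', FiberConn L v hu h → FiberConn L v ho h' → h < h') ∧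
    (∀ (p : ℤ × ℤ) (h : ℤ), L.Adj (v, h) (p, h) →
      (D.OverAt v p → FiberConn L v h ho) ∧ (D.UnderAt v p → FiberConn L v h hu)))

/-- A lattice diagram is realizable if some lattice link realizes it. -/
def Realizable (D : LatticeDiagram) : Prop := ∃ L : LatticeLink, Realizes D L

private lemma unit_cases {a b : ℤ} (h : a ^ 2 + b ^ 2 = 1) :
    (a = 0 ∧ (b = 1 ∨ b = -1)) ∨ (b = 0 ∧ (a = 1 ∨ a = -1)) := by
  have ha1 : -1 ≤ a := by nlinarith [sq_nonneg b, sq_nonneg (a + 1)]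
  have ha2 : a ≤ 1 := by nlinarith [sq_nonneg b, sq_nonneg (a - 1)]
  have hb1 : -1 ≤ b := by nlinarith [sq_nonneg a, sq_nonneg (b + 1)]
  have hb2 : b ≤ 1 := by nlinarith [sq_nonneg a, sq_nonneg (b - 1)]
  interval_cases a <;> interval_cases b <;> revert h <;> norm_num

private lemma crossing_adj (D : LatticeDiagram) {v : ℤ × ℤ} (h : D.IsCrossing v)
    {r : ℤ × ℤ} (hr : (v.1 - r.1) ^ 2 + (v.2 - r.2) ^ 2 = 1) : D.Adj v r := by
  set N : Set (ℤ × ℤ) := {(v.1+1, v.2), (v.1-1, v.2), (v.1, v.2+1), (v.1, v.2-1)} with hN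
  have hsub : {s | D.Adj v s} ⊆ N := by
    intro s hs
    have hu := D.unit v s hs
    rcases unit_cases hu with ⟨h1, h2 | h2⟩ | ⟨h1, h2 | h2⟩ <;>
      simp only [hN, Set.mem_insert_iff, Set.mem_singleton_iff, Prod.ext_iff] <;> omega
  have hfin : N.Finite := by
    exact (((Set.finite_singleton _).insert _).insert _).insert _
  have hcard : N.ncard ≤ 4 := by
    have h1 : ({(v.1, v.2-1)} : Set (ℤ×ℤ)).ncard = 1 := Set.ncard_singleton _
    have h2 := Set.ncard_insert_le (v.1, v.2+1) ({(v.1, v.2-1)} : Set (ℤ×ℤ))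
    have h3 := Set.ncard_insert_le (v.1-1, v.2) ({(v.1, v.2+1), (v.1, v.2-1)} : Set (ℤ×ℤ))
    have h4 := Set.ncard_insert_le (v.1+1, v.2) ({(v.1-1, v.2), (v.1, v.2+1), (v.1, v.2-1)} : Set (ℤ×ℤ))
    rw [hN]; omega
  have heq : {s | D.Adj v s} = N :=
    Set.eq_of_subset_of_ncard_le hsub (by rw [h]; exact hcard) hfin
  have hrN : r ∈ N := by
    rcases unit_cases hr with ⟨h1, h2 | h2⟩ | ⟨h1, h2 | h2⟩ <;>
      simp only [hN, Set.mem_insert_iff, Set.mem_singleton_iff, Prod.ext_iff] <;> omega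
  have : r ∈ {s | D.Adj v s} := heq ▸ hrN
  exact this

private lemma not_over_and_under (D : LatticeDiagram) {v p : ℤ × ℤ}
    (ho : D.OverAt v p) (hu : D.UnderAt v p) : False := by
  obtain ⟨hadj, ho⟩ := ho
  obtain ⟨-, hu⟩ := hu
  have hunit := D.unit v p hadj
  rcases ho with ⟨h1, h2⟩ | ⟨h1, h2⟩ <;> rcases hu with ⟨h3, h4⟩ | ⟨h3, h4⟩ <;> simp_all

private lemma walk_struct (D : LatticeDiagram) {n : ℕ} {c : Fin (n + 1) → Sym2 (ℤ × ℤ)}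
    (hc : ∀ i, GammaEdge D (c i) (c (i + 1))) :
    ∃ v : Fin (n + 1) → ℤ × ℤ, ∀ i, D.IsCrossing (v i) ∧
      D.OverAt (v i) (v (i + 1)) ∧ D.UnderAt (v (i + 1)) (v i) := by
  choose V p q hcr hun hov he hf using hc
  have key : ∀ i, V (i + 1) = q i ∧ p (i + 1) = V i := by
    intro i
    have h1 : s(V i, q i) = s(V (i + 1), p (i + 1)) := (hf i).symm.trans (he (i + 1))
    rw [Sym2.eq_iff] at h1
    rcases h1 with ⟨h1, h2⟩ | ⟨h1, h2⟩
    · exfalso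
      exact not_over_and_under D (hov i) (h1 ▸ h2 ▸ hun (i + 1))
    · exact ⟨h2.symm, h1.symm⟩
  refine ⟨V, fun i => ⟨hcr i, ?_, ?_⟩⟩
  · rw [(key i).1]; exact hov i
  · have := hun (i + 1)
    rwa [(key i).2] at this

private lemma sym2_ne {a b c d : ℤ × ℤ} (h : ¬((a = c ∧ b = d) ∨ (a = d ∧ b = c))) :
    s(a, b) ≠ s(c, d) := by rw [Ne, Sym2.eq_iff]; exact h

private lemma inj4 {α : Type*} {e0 e1 e2 e3 : α} (d01 : e0 ≠ e1) (d02 : e0 ≠ e2)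
    (d03 : e0 ≠ e3) (d12 : e1 ≠ e2) (d13 : e1 ≠ e3) (d23 : e2 ≠ e3) :
    Function.Injective ![e0, e1, e2, e3] := by
  intro a b hab
  fin_cases a <;> fin_cases b <;>
    first
      | rfl
      | exact absurd hab d01 | exact absurd hab d02 | exact absurd hab d03
      | exact absurd hab d12 | exact absurd hab d13 | exact absurd hab d23
      | exact absurd hab.symm d01 | exact absurd hab.symm d02 | exact absurd hab.symm d03
      | exact absurd hab.symm d12 | exact absurd hab.symm d13 | exact absurd hab.symm d23

private lemma square_cycle (D : LatticeDiagram) (x y : ℤ) (t : Bool)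
    (hV : D.IsCrossing (x, y)) (hA : D.IsCrossing (x - 1, y))
    (hB : D.IsCrossing (x, y - 1)) (hW : D.IsCrossing (x - 1, y - 1))
    (hOV : D.horizOver (x, y) = t) (hOA : D.horizOver (x - 1, y) = !t)
    (hOB : D.horizOver (x, y - 1) = !t) (hOW : D.horizOver (x - 1, y - 1) = t) :
    Has4Cycle (GammaEdge D) := by
  have aVA : D.Adj (x, y) (x - 1, y) := crossing_adj D hV (by show (x - (x-1))^2 + (y - y)^2 = 1; ring)
  have aVB : D.Adj (x, y) (x, y - 1) := crossing_adj D hV (by show (x - x)^2 + (y - (y-1))^2 = 1; ring)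
  have aAV : D.Adj (x - 1, y) (x, y) := crossing_adj D hA (by show (x - 1 - x)^2 + (y - y)^2 = 1; ring)
  have aAW : D.Adj (x - 1, y) (x - 1, y - 1) := crossing_adj D hA (by show (x - 1 - (x-1))^2 + (y - (y-1))^2 = 1; ring)
  have aBV : D.Adj (x, y - 1) (x, y) := crossing_adj D hB (by show (x - x)^2 + (y - 1 - y)^2 = 1; ring)
  have aBW : D.Adj (x, y - 1) (x - 1, y - 1) := crossing_adj D hB (by show (x - (x-1))^2 + (y - 1 - (y-1))^2 = 1; ring)
  have aWA : D.Adj (x - 1, y - 1) (x - 1, y) := crossing_adj D hW (by show (x - 1 - (x-1))^2 + (y - 1 - y)^2 = 1; ring)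
  have aWB : D.Adj (x - 1, y - 1) (x, y - 1) := crossing_adj D hW (by show (x - 1 - x)^2 + (y - 1 - (y-1))^2 = 1; ring)
  cases t with
  | false =>
    refine ⟨![s((x-1,y),(x,y)), s((x,y),(x,y-1)), s((x,y-1),(x-1,y-1)), s((x-1,y-1),(x-1,y))], ?_, ?_⟩
    · exact inj4 (sym2_ne (by simp [Prod.ext_iff] <;> omega)) (sym2_ne (by simp [Prod.ext_iff] <;> omega))
        (sym2_ne (by simp [Prod.ext_iff] <;> omega)) (sym2_ne (by simp [Prod.ext_iff] <;> omega))
        (sym2_ne (by simp [Prod.ext_iff] <;> omega)) (sym2_ne (by simp [Prod.ext_iff] <;> omega))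
    · intro i
      fin_cases i
      · exact ⟨(x,y), (x-1,y), (x,y-1), hV, ⟨aVA, Or.inl ⟨rfl, hOV⟩⟩,
          ⟨aVB, Or.inr ⟨rfl, hOV⟩⟩, Sym2.eq_swap, rfl⟩
      · exact ⟨(x,y-1), (x,y), (x-1,y-1), hB, ⟨aBV, Or.inr ⟨rfl, hOB⟩⟩,
          ⟨aBW, Or.inl ⟨rfl, hOB⟩⟩, Sym2.eq_swap, rfl⟩
      · exact ⟨(x-1,y-1), (x,y-1), (x-1,y), hW, ⟨aWB, Or.inl ⟨rfl, hOW⟩⟩,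
          ⟨aWA, Or.inr ⟨rfl, hOW⟩⟩, Sym2.eq_swap, rfl⟩
      · exact ⟨(x-1,y), (x-1,y-1), (x,y), hA, ⟨aAW, Or.inr ⟨rfl, hOA⟩⟩,
          ⟨aAV, Or.inl ⟨rfl, hOA⟩⟩, Sym2.eq_swap, rfl⟩
  | true =>
    refine ⟨![s((x,y-1),(x,y)), s((x,y),(x-1,y)), s((x-1,y),(x-1,y-1)), s((x-1,y-1),(x,y-1))], ?_, ?_⟩
    · exact inj4 (sym2_ne (by simp [Prod.ext_iff] <;> omega)) (sym2_ne (by simp [Prod.ext_iff] <;> omega))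
        (sym2_ne (by simp [Prod.ext_iff] <;> omega)) (sym2_ne (by simp [Prod.ext_iff] <;> omega))
        (sym2_ne (by simp [Prod.ext_iff] <;> omega)) (sym2_ne (by simp [Prod.ext_iff] <;> omega))
    · intro i
      fin_cases i
      · exact ⟨(x,y), (x,y-1), (x-1,y), hV, ⟨aVB, Or.inr ⟨rfl, hOV⟩⟩,
          ⟨aVA, Or.inl ⟨rfl, hOV⟩⟩, Sym2.eq_swap, rfl⟩
      · exact ⟨(x-1,y), (x,y), (x-1,y-1), hA, ⟨aAV, Or.inl ⟨rfl, hOA⟩⟩,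
          ⟨aAW, Or.inr ⟨rfl, hOA⟩⟩, Sym2.eq_swap, rfl⟩
      · exact ⟨(x-1,y-1), (x-1,y), (x,y-1), hW, ⟨aWA, Or.inr ⟨rfl, hOW⟩⟩,
          ⟨aWB, Or.inl ⟨rfl, hOW⟩⟩, Sym2.eq_swap, rfl⟩
      · exact ⟨(x,y-1), (x-1,y-1), (x,y), hB, ⟨aBW, Or.inl ⟨rfl, hOB⟩⟩,
          ⟨aBV, Or.inr ⟨rfl, hOB⟩⟩, Sym2.eq_swap, rfl⟩

private lemma neighbor_cases (D : LatticeDiagram) {V P : ℤ × ℤ} (hadj : D.Adj V P)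
    (hle : toLex P ≤ toLex V) :
    (P.1 = V.1 - 1 ∧ P.2 = V.2) ∨ (P.1 = V.1 ∧ P.2 = V.2 - 1) := by
  have hu := D.unit V P hadj
  have hle' : P.1 < V.1 ∨ P.1 = V.1 ∧ P.2 ≤ V.2 := Prod.lex_def.mp hle
  rcases unit_cases hu with ⟨h1, h2 | h2⟩ | ⟨h1, h2 | h2⟩ <;> omega
private lemma cycle_to_four (D : LatticeDiagram) (h : HasDirectedCycle (GammaEdge D)) :
    Has4Cycle (GammaEdge D) := by
  obtain ⟨n, c, -, hE⟩ := h
  obtain ⟨v, hv⟩ := walk_struct D hE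
  obtain ⟨i, hmax⟩ := Finite.exists_max fun j => toLex (v j)
  have hpred : i - 1 + 1 = i := by
    rw [sub_add_cancel]
  have hQ : D.UnderAt (v i) (v (i - 1)) := by
    have := (hv (i - 1)).2.2
    rwa [hpred] at this
  have hP : D.OverAt (v i) (v (i + 1)) := (hv i).2.1
  cases hOV : D.horizOver (v i) with
  | false =>
    -- incoming understrand is horizontal: Q = (x-1, y); outgoing overstrand vertical: P = (x, y-1)
    obtain ⟨adjQ, hQ'⟩ := hQ
    have hq2 : (v (i - 1)).2 = (v i).2 := by
      rcases hQ' with ⟨h1, -⟩ | ⟨-, h2⟩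
      · exact h1
      · rw [hOV] at h2; cases h2
    have hQc : (v (i - 1)).1 = (v i).1 - 1 ∧ (v (i - 1)).2 = (v i).2 := by
      rcases neighbor_cases D adjQ (hmax (i - 1)) with h | h
      · exact h
      · exfalso; omega
    obtain ⟨adjP, hP'⟩ := hP
    have hp1 : (v (i + 1)).1 = (v i).1 := by
      rcases hP' with ⟨-, h2⟩ | ⟨h1, -⟩
      · rw [hOV] at h2; cases h2
      · exact h1
    have hPc : (v (i + 1)).1 = (v i).1 ∧ (v (i + 1)).2 = (v i).2 - 1 := by
      rcases neighbor_cases D adjP (hmax (i + 1)) with h | h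
      · exfalso; omega
      · exact h
    -- horizOver at B := v (i+1)
    have hBV : D.UnderAt (v (i + 1)) (v i) := (hv i).2.2
    have hOB : D.horizOver (v (i + 1)) = true := by
      rcases hBV.2 with ⟨h1, -⟩ | ⟨-, h2⟩
      · exfalso; omega
      · exact h2
    -- the next vertex u = v (i+1+1) is W = (x-1, y-1)
    have hBu : D.OverAt (v (i + 1)) (v (i + 1 + 1)) := (hv (i + 1)).2.1
    obtain ⟨adjBu, hBu'⟩ := hBu
    have hu2 : (v (i + 1 + 1)).2 = (v (i + 1)).2 := by
      rcases hBu' with ⟨h1, -⟩ | ⟨-, h2⟩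
      · exact h1
      · rw [hOB] at h2; cases h2
    have hWc : (v (i + 1 + 1)).1 = (v (i + 1)).1 - 1 ∧ (v (i + 1 + 1)).2 = (v (i + 1)).2 := by
      have hUnit := D.unit (v (i + 1)) (v (i + 1 + 1)) adjBu
      have hl : (v (i + 1 + 1)).1 < (v i).1 ∨
          (v (i + 1 + 1)).1 = (v i).1 ∧ (v (i + 1 + 1)).2 ≤ (v i).2 :=
        Prod.lex_def.mp (hmax (i + 1 + 1))
      rcases unit_cases hUnit with ⟨h1, h2 | h2⟩ | ⟨h1, h2 | h2⟩ <;> omega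
    -- horizOver at W
    have hWB : D.UnderAt (v (i + 1 + 1)) (v (i + 1)) := (hv (i + 1)).2.2
    have hOW : D.horizOver (v (i + 1 + 1)) = false := by
      rcases hWB.2 with ⟨-, h2⟩ | ⟨h1, -⟩
      · exact h2
      · exfalso; omega
    -- horizOver at A := v (i-1)
    have hAV : D.OverAt (v (i - 1)) (v i) := by
      have := (hv (i - 1)).2.1
      rwa [hpred] at this
    have hOA : D.horizOver (v (i - 1)) = true := by
      rcases hAV.2 with ⟨-, h2⟩ | ⟨h1, -⟩
      · exact h2
      · exfalso; omega
    -- assemble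
    have eV : v i = ((v i).1, (v i).2) := rfl
    have eA : v (i - 1) = ((v i).1 - 1, (v i).2) := Prod.ext_iff.mpr ⟨hQc.1, hQc.2⟩
    have eB : v (i + 1) = ((v i).1, (v i).2 - 1) := Prod.ext_iff.mpr ⟨hPc.1, hPc.2⟩
    have eW : v (i + 1 + 1) = ((v i).1 - 1, (v i).2 - 1) :=
      Prod.ext_iff.mpr ⟨by omega, by omega⟩
    exact square_cycle D (v i).1 (v i).2 false
      (eV ▸ (hv i).1) (eA ▸ (hv (i - 1)).1) (eB ▸ (hv (i + 1)).1) (eW ▸ (hv (i + 1 + 1)).1)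
      (eV ▸ hOV) (eA ▸ hOA) (eB ▸ hOB) (eW ▸ hOW)
  | true =>
    -- incoming understrand vertical: Q = (x, y-1); outgoing overstrand horizontal: P = (x-1, y)
    obtain ⟨adjQ, hQ'⟩ := hQ
    have hq1 : (v (i - 1)).1 = (v i).1 := by
      rcases hQ' with ⟨-, h2⟩ | ⟨h1, -⟩
      · rw [hOV] at h2; cases h2
      · exact h1
    have hQc : (v (i - 1)).1 = (v i).1 ∧ (v (i - 1)).2 = (v i).2 - 1 := by
      rcases neighbor_cases D adjQ (hmax (i - 1)) with h | h
      · exfalso; omega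
      · exact h
    obtain ⟨adjP, hP'⟩ := hP
    have hp2 : (v (i + 1)).2 = (v i).2 := by
      rcases hP' with ⟨h1, -⟩ | ⟨-, h2⟩
      · exact h1
      · rw [hOV] at h2; cases h2
    have hPc : (v (i + 1)).1 = (v i).1 - 1 ∧ (v (i + 1)).2 = (v i).2 := by
      rcases neighbor_cases D adjP (hmax (i + 1)) with h | h
      · exact h
      · exfalso; omega
    -- horizOver at A := v (i+1)
    have hAV : D.UnderAt (v (i + 1)) (v i) := (hv i).2.2
    have hOA : D.horizOver (v (i + 1)) = false := by
      rcases hAV.2 with ⟨-, h2⟩ | ⟨h1, -⟩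
      · exact h2
      · exfalso; omega
    -- horizOver at B := v (i-1)
    have hBV : D.OverAt (v (i - 1)) (v i) := by
      have := (hv (i - 1)).2.1
      rwa [hpred] at this
    have hOB : D.horizOver (v (i - 1)) = false := by
      rcases hBV.2 with ⟨h1, -⟩ | ⟨-, h2⟩
      · exfalso; omega
      · exact h2
    -- the previous vertex u = v (i-1-1) is W = (x-1, y-1)
    have hpred2 : i - 1 - 1 + 1 = i - 1 := by rw [sub_add_cancel]
    have hBu : D.UnderAt (v (i - 1)) (v (i - 1 - 1)) := by
      have := (hv (i - 1 - 1)).2.2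
      rwa [hpred2] at this
    obtain ⟨adjBu, hBu'⟩ := hBu
    have hu2 : (v (i - 1 - 1)).2 = (v (i - 1)).2 := by
      rcases hBu' with ⟨h1, -⟩ | ⟨-, h2⟩
      · exact h1
      · rw [hOB] at h2; cases h2
    have hWc : (v (i - 1 - 1)).1 = (v (i - 1)).1 - 1 ∧ (v (i - 1 - 1)).2 = (v (i - 1)).2 := by
      have hUnit := D.unit (v (i - 1)) (v (i - 1 - 1)) adjBu
      have hl : (v (i - 1 - 1)).1 < (v i).1 ∨
          (v (i - 1 - 1)).1 = (v i).1 ∧ (v (i - 1 - 1)).2 ≤ (v i).2 :=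
        Prod.lex_def.mp (hmax (i - 1 - 1))
      rcases unit_cases hUnit with ⟨h1, h2 | h2⟩ | ⟨h1, h2 | h2⟩ <;> omega
    -- horizOver at W
    have hWB : D.OverAt (v (i - 1 - 1)) (v (i - 1)) := by
      have := (hv (i - 1 - 1)).2.1
      rwa [hpred2] at this
    have hOW : D.horizOver (v (i - 1 - 1)) = true := by
      rcases hWB.2 with ⟨-, h2⟩ | ⟨h1, -⟩
      · exact h2
      · exfalso; omega
    have eV : v i = ((v i).1, (v i).2) := rfl
    have eA : v (i + 1) = ((v i).1 - 1, (v i).2) := Prod.ext_iff.mpr ⟨hPc.1, hPc.2⟩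
    have eB : v (i - 1) = ((v i).1, (v i).2 - 1) := Prod.ext_iff.mpr ⟨hQc.1, hQc.2⟩
    have eW : v (i - 1 - 1) = ((v i).1 - 1, (v i).2 - 1) :=
      Prod.ext_iff.mpr ⟨by omega, by omega⟩
    exact square_cycle D (v i).1 (v i).2 true
      (eV ▸ (hv i).1) (eA ▸ (hv (i + 1)).1) (eB ▸ (hv (i - 1)).1) (eW ▸ (hv (i - 1 - 1)).1)
      (eV ▸ hOV) (eA ▸ hOA) (eB ▸ hOB) (eW ▸ hOW)
/-- The digraph associated with a lattice diagram has no directed cycles iff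
it has no directed 4-cycles. -/
theorem stmt_9 (D : LatticeDiagram) :
    ¬ HasDirectedCycle (GammaEdge D) ↔ ¬ Has4Cycle (GammaEdge D) := by
  constructor
  · intro h h4
    obtain ⟨c, hinj, hE⟩ := h4
    exact h ⟨3, c, hinj, hE⟩
  · intro h4 hc
    exact h4 (cycle_to_four D hc)
end

section
/- A lattice diagram is realizable as the projection of a lattice link if and only if its associated digraph admits a height function. -/
section Aux

variable (D : LatticeDiagram)

lemma adj_ne {a b : ℤ × ℤ} (h : D.Adj a b) : a ≠ b := by
  intro he
  rw [he] at h
  have := D.unit b b h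
  simp at this

lemma int_unit {x y : ℤ} (h : x ^ 2 + y ^ 2 = 1) :
    (x = 0 ∧ (y = 1 ∨ y = -1)) ∨ (y = 0 ∧ (x = 1 ∨ x = -1)) := by
  have h1 : -1 ≤ x := by nlinarith [sq_nonneg (x + 1), sq_nonneg y]
  have h2 : x ≤ 1 := by nlinarith [sq_nonneg (x - 1), sq_nonneg y]
  have h3 : -1 ≤ y := by nlinarith [sq_nonneg (y + 1), sq_nonneg x]
  have h4 : y ≤ 1 := by nlinarith [sq_nonneg (y - 1), sq_nonneg x]
  interval_cases x <;> interval_cases y <;> simp_all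

lemma adj_cases {a b : ℤ × ℤ} (h : D.Adj a b) :
    b = (a.1 + 1, a.2) ∨ b = (a.1 - 1, a.2) ∨ b = (a.1, a.2 + 1) ∨ b = (a.1, a.2 - 1) := by
  have := int_unit (D.unit a b h)
  rcases b with ⟨b1, b2⟩
  simp only [Prod.ext_iff] at *
  omega

lemma not_under_over {a b : ℤ × ℤ} (h : D.Adj a b) :
    ¬ (D.UnderAt a b ∧ D.OverAt a b) := by
  rintro ⟨⟨_, h1⟩, ⟨_, h2⟩⟩
  have hne := adj_ne D h
  rcases h1 with ⟨e1, e2⟩ | ⟨e1, e2⟩ <;> rcases h2 with ⟨f1, f2⟩ | ⟨f1, f2⟩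
  · rw [e2] at f2; exact Bool.false_ne_true f2
  · exact hne (Prod.ext_iff.mpr ⟨f1.symm, e1.symm⟩)
  · exact hne (Prod.ext_iff.mpr ⟨e1.symm, f1.symm⟩)
  · rw [e2] at f2; exact Bool.false_ne_true f2.symm

lemma under_or_over {a b : ℤ × ℤ} (h : D.Adj a b) : D.UnderAt a b ∨ D.OverAt a b := by
  have hc := adj_cases D h
  cases hov : D.horizOver a with
  | false =>
    rcases hc with rfl | rfl | rfl | rfl
    · exact Or.inl ⟨h, Or.inl ⟨rfl, hov⟩⟩
    · exact Or.inl ⟨h, Or.inl ⟨rfl, hov⟩⟩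
    · exact Or.inr ⟨h, Or.inr ⟨rfl, hov⟩⟩
    · exact Or.inr ⟨h, Or.inr ⟨rfl, hov⟩⟩
  | true =>
    rcases hc with rfl | rfl | rfl | rfl
    · exact Or.inr ⟨h, Or.inl ⟨rfl, hov⟩⟩
    · exact Or.inr ⟨h, Or.inl ⟨rfl, hov⟩⟩
    · exact Or.inl ⟨h, Or.inr ⟨rfl, hov⟩⟩
    · exact Or.inl ⟨h, Or.inr ⟨rfl, hov⟩⟩

lemma fiber_symm (L : LatticeLink) (v : ℤ × ℤ) {h h' : ℤ} (hc : FiberConn L v h h') :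
    FiberConn L v h' h :=
  (@Relation.ReflTransGen.stdSymm _ _ ⟨fun _ _ hab => L.symm _ _ hab⟩).symm _ _ hc

/-- Forward direction. -/
lemma forward_dir (hR : Realizable D) :
    ∃ ht : Sym2 (ℤ × ℤ) → ℤ, ∀ e f, GammaEdge D e f → ht e < ht f := by
  obtain ⟨L, h1, h2, h3, h4⟩ := hR
  classical
  refine ⟨fun e => if hE : ∃ z : ℤ, ∃ ab : (ℤ × ℤ) × (ℤ × ℤ),
      e = s(ab.1, ab.2) ∧ L.Adj (ab.1, z) (ab.2, z) ∧ D.Adj ab.1 ab.2 then hE.choose else 0,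
    ?_⟩
  have key : ∀ a b : ℤ × ℤ, D.Adj a b →
      ∀ hE : ∃ z : ℤ, ∃ ab : (ℤ × ℤ) × (ℤ × ℤ),
        s(a, b) = s(ab.1, ab.2) ∧ L.Adj (ab.1, z) (ab.2, z) ∧ D.Adj ab.1 ab.2,
      L.Adj (a, hE.choose) (b, hE.choose) := by
    intro a b hab hE
    obtain ⟨⟨a', b'⟩, heq, hadj, _⟩ := hE.choose_spec
    rw [Sym2.eq_iff] at heq
    rcases heq with ⟨rfl, rfl⟩ | ⟨rfl, rfl⟩
    · exact hadj
    · exact L.symm _ _ hadj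
  rintro e f ⟨v, p, q, hc, hund, hov, rfl, rfl⟩
  obtain ⟨hu, ho, _, _, _, _, hlt, hattach⟩ := h4 v hc
  obtain ⟨zp, hzp, _⟩ := h2 v p hund.1
  obtain ⟨zq, hzq, _⟩ := h2 v q hov.1
  have hEp : ∃ z : ℤ, ∃ ab : (ℤ × ℤ) × (ℤ × ℤ),
      s(v, p) = s(ab.1, ab.2) ∧ L.Adj (ab.1, z) (ab.2, z) ∧ D.Adj ab.1 ab.2 :=
    ⟨zp, (v, p), rfl, hzp, hund.1⟩
  have hEq : ∃ z : ℤ, ∃ ab : (ℤ × ℤ) × (ℤ × ℤ),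
      s(v, q) = s(ab.1, ab.2) ∧ L.Adj (ab.1, z) (ab.2, z) ∧ D.Adj ab.1 ab.2 :=
    ⟨zq, (v, q), rfl, hzq, hov.1⟩
  simp only [dif_pos hEp, dif_pos hEq]
  have hp := key v p hund.1 hEp
  have hq := key v q hov.1 hEq
  have hcu : FiberConn L v hEp.choose hu := (hattach p hEp.choose hp).2 hund
  have hco : FiberConn L v hEq.choose ho := (hattach q hEq.choose hq).1 hov
  exact hlt _ _ (fiber_symm L v hcu) (fiber_symm L v hco)

end Aux


section Construction

variable (D : LatticeDiagram) (ht : Sym2 (ℤ × ℤ) → ℤ)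

/-- A vertical edge of the constructed link, from `(a,z)` to `(a,z+1)`. -/
def vspan (a : ℤ × ℤ) (z : ℤ) : Prop :=
  ∃ b c, D.Adj a b ∧ D.Adj a c ∧ ht s(a, b) ≤ z ∧ z + 1 ≤ ht s(a, c) ∧
    (D.IsCrossing a → (D.UnderAt a b ∧ D.UnderAt a c) ∨ (D.OverAt a b ∧ D.OverAt a c))

/-- The adjacency of the constructed link. -/
def linkAdj (p q : (ℤ × ℤ) × ℤ) : Prop :=
  (p.2 = q.2 ∧ D.Adj p.1 q.1 ∧ ht s(p.1, q.1) = p.2) ∨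
  (p.1 = q.1 ∧ ((q.2 = p.2 + 1 ∧ vspan D ht p.1 p.2) ∨ (p.2 = q.2 + 1 ∧ vspan D ht p.1 q.2)))

lemma linkAdj_symm (p q : (ℤ × ℤ) × ℤ) (h : linkAdj D ht p q) : linkAdj D ht q p := by
  rcases h with ⟨h1, h2, h3⟩ | ⟨h1, h2⟩
  · exact Or.inl ⟨h1.symm, D.symm _ _ h2, by rw [Sym2.eq_swap]; omega⟩
  · refine Or.inr ⟨h1.symm, ?_⟩
    rw [← h1]
    tauto

lemma linkAdj_unit (p q : (ℤ × ℤ) × ℤ) (h : linkAdj D ht p q) :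
    (p.1.1 - q.1.1) ^ 2 + (p.1.2 - q.1.2) ^ 2 + (p.2 - q.2) ^ 2 = 1 := by
  rcases h with ⟨h1, h2, _⟩ | ⟨h1, h2⟩
  · have := D.unit _ _ h2
    rw [h1]
    ring_nf
    ring_nf at this
    omega
  · have h2' : (p.2 - q.2) ^ 2 = 1 := by
      have : p.2 - q.2 = 1 ∨ p.2 - q.2 = -1 := by omega
      rcases this with h | h <;> rw [h] <;> ring
    rw [h1]
    simpa using h2' 

/-- The neighbourhood of a crossing consists of the four adjacent lattice points. -/
lemma cross_nbrs (a : ℤ × ℤ) (hc : D.IsCrossing a) :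
    {r | D.Adj a r} =
      {(a.1 + 1, a.2), (a.1 - 1, a.2), (a.1, a.2 + 1), (a.1, a.2 - 1)} := by
  apply Set.eq_of_subset_of_ncard_le
  · intro r hr
    rcases adj_cases D hr with rfl | rfl | rfl | rfl <;> simp
  · have h4 : ({(a.1 + 1, a.2), (a.1 - 1, a.2), (a.1, a.2 + 1), (a.1, a.2 - 1)} :
        Set (ℤ × ℤ)).ncard ≤ 4 := by
      refine le_trans (Set.ncard_insert_le _ _) ?_
      refine le_trans (Nat.add_le_add_right (Set.ncard_insert_le _ _) 1) ?_
      refine le_trans (Nat.add_le_add_right (Nat.add_le_add_right (Set.ncard_insert_le _ _) 1) 1) ?_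
      simp
    rw [hc]
    exact h4
  · exact Set.toFinite _

/-- Structure of a crossing: two understrands and two overstrands, each pair
ordered by height. -/
lemma cross_data (a : ℤ × ℤ) (hc : D.IsCrossing a) :
    ∃ b1 b2 c1 c2 : ℤ × ℤ,
      D.UnderAt a b1 ∧ D.UnderAt a b2 ∧ D.OverAt a c1 ∧ D.OverAt a c2 ∧
      b1 ≠ b2 ∧ c1 ≠ c2 ∧ ht s(a, b1) ≤ ht s(a, b2) ∧ ht s(a, c1) ≤ ht s(a, c2) ∧
      (∀ r, D.Adj a r → r = b1 ∨ r = b2 ∨ r = c1 ∨ r = c2) := by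
  have hN := cross_nbrs D a hc
  have memiff : ∀ r, D.Adj a r ↔ r ∈ ({(a.1 + 1, a.2), (a.1 - 1, a.2), (a.1, a.2 + 1),
      (a.1, a.2 - 1)} : Set (ℤ × ℤ)) := by
    intro r
    constructor
    · intro hr; rw [← hN]; exact hr
    · intro hr; have : r ∈ {r | D.Adj a r} := by rw [hN]; exact hr
      exact this
  have aR : D.Adj a (a.1 + 1, a.2) := (memiff _).mpr (by simp)
  have aL : D.Adj a (a.1 - 1, a.2) := (memiff _).mpr (by simp)
  have aU : D.Adj a (a.1, a.2 + 1) := (memiff _).mpr (by simp)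
  have aD : D.Adj a (a.1, a.2 - 1) := (memiff _).mpr (by simp)
  have hRL : (a.1 + 1, a.2) ≠ (a.1 - 1, a.2) := by simp [Prod.ext_iff]; omega
  have hUD : (a.1, a.2 + 1) ≠ (a.1, a.2 - 1) := by simp [Prod.ext_iff]; omega
  have key : ∃ b1 b2 c1 c2 : ℤ × ℤ,
      D.UnderAt a b1 ∧ D.UnderAt a b2 ∧ D.OverAt a c1 ∧ D.OverAt a c2 ∧
      b1 ≠ b2 ∧ c1 ≠ c2 ∧
      (∀ r, D.Adj a r → r = b1 ∨ r = b2 ∨ r = c1 ∨ r = c2) := by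
    cases hov : D.horizOver a with
    | false =>
      refine ⟨(a.1 + 1, a.2), (a.1 - 1, a.2), (a.1, a.2 + 1), (a.1, a.2 - 1),
        ⟨aR, Or.inl ⟨rfl, hov⟩⟩, ⟨aL, Or.inl ⟨rfl, hov⟩⟩,
        ⟨aU, Or.inr ⟨rfl, hov⟩⟩, ⟨aD, Or.inr ⟨rfl, hov⟩⟩, hRL, hUD, ?_⟩
      intro r hr
      have := (memiff r).mp hr
      simpa using this
    | true =>
      refine ⟨(a.1, a.2 + 1), (a.1, a.2 - 1), (a.1 + 1, a.2), (a.1 - 1, a.2),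
        ⟨aU, Or.inr ⟨rfl, hov⟩⟩, ⟨aD, Or.inr ⟨rfl, hov⟩⟩,
        ⟨aR, Or.inl ⟨rfl, hov⟩⟩, ⟨aL, Or.inl ⟨rfl, hov⟩⟩, hUD, hRL, ?_⟩
      intro r hr
      have := (memiff r).mp hr
      simp at this
      tauto
  obtain ⟨b1, b2, c1, c2, hb1, hb2, hc1, hc2, hbne, hcne, hall⟩ := key
  rcases le_total (ht s(a, b1)) (ht s(a, b2)) with hb | hb <;>
    rcases le_total (ht s(a, c1)) (ht s(a, c2)) with hcle | hcle
  · exact ⟨b1, b2, c1, c2, hb1, hb2, hc1, hc2, hbne, hcne, hb, hcle, hall⟩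
  · exact ⟨b1, b2, c2, c1, hb1, hb2, hc2, hc1, hbne, hcne.symm, hb, hcle,
      fun r hr => by have := hall r hr; tauto⟩
  · exact ⟨b2, b1, c1, c2, hb2, hb1, hc1, hc2, hbne.symm, hcne, hb, hcle,
      fun r hr => by have := hall r hr; tauto⟩
  · exact ⟨b2, b1, c2, c1, hb2, hb1, hc2, hc1, hbne.symm, hcne.symm, hb, hcle,
      fun r hr => by have := hall r hr; tauto⟩

/-- Structure of a non-crossing vertex with an incident edge. -/
lemma nc_data (a : ℤ × ℤ) (b : ℤ × ℤ) (hadj : D.Adj a b) (hnc : ¬ D.IsCrossing a) :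
    ∃ b1 b2 : ℤ × ℤ, D.Adj a b1 ∧ D.Adj a b2 ∧ b1 ≠ b2 ∧
      ht s(a, b1) ≤ ht s(a, b2) ∧ (∀ r, D.Adj a r → r = b1 ∨ r = b2) := by
  have h2 : {r | D.Adj a r}.ncard = 2 := by
    rcases D.deg a b hadj with h | h
    · exact h
    · exact absurd h hnc
  obtain ⟨x, y, hxy, hset⟩ := Set.ncard_eq_two.mp h2
  have hx : D.Adj a x := by rw [show D.Adj a x ↔ x ∈ {r | D.Adj a r} from Iff.rfl, hset]; simp
  have hy : D.Adj a y := by rw [show D.Adj a y ↔ y ∈ {r | D.Adj a r} from Iff.rfl, hset]; simp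
  have hall : ∀ r, D.Adj a r → r = x ∨ r = y := by
    intro r hr
    have : r ∈ ({x, y} : Set (ℤ × ℤ)) := by rw [← hset]; exact hr
    simpa using this
  rcases le_total (ht s(a, x)) (ht s(a, y)) with h | h
  · exact ⟨x, y, hx, hy, hxy, h, hall⟩
  · exact ⟨y, x, hy, hx, hxy.symm, h, fun r hr => (hall r hr).symm⟩


lemma under_lt_over (Hht : ∀ e f, GammaEdge D e f → ht e < ht f) {a b c : ℤ × ℤ}
    (hc : D.IsCrossing a) (hb : D.UnderAt a b) (hco : D.OverAt a c) :
    ht s(a, b) < ht s(a, c) :=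
  Hht _ _ ⟨a, b, c, hc, hb, hco, rfl, rfl⟩

lemma under_mem {a b1 b2 c1 c2 : ℤ × ℤ}
    (hc1 : D.OverAt a c1) (hc2 : D.OverAt a c2)
    (hall : ∀ r, D.Adj a r → r = b1 ∨ r = b2 ∨ r = c1 ∨ r = c2)
    {b : ℤ × ℤ} (hb : D.UnderAt a b) : b = b1 ∨ b = b2 := by
  rcases hall b hb.1 with h | h | rfl | rfl
  · exact Or.inl h
  · exact Or.inr h
  · exact absurd ⟨hb, hc1⟩ (not_under_over D hb.1)
  · exact absurd ⟨hb, hc2⟩ (not_under_over D hb.1)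

lemma over_mem {a b1 b2 c1 c2 : ℤ × ℤ}
    (hb1 : D.UnderAt a b1) (hb2 : D.UnderAt a b2)
    (hall : ∀ r, D.Adj a r → r = b1 ∨ r = b2 ∨ r = c1 ∨ r = c2)
    {c : ℤ × ℤ} (hc : D.OverAt a c) : c = c1 ∨ c = c2 := by
  rcases hall c hc.1 with rfl | rfl | h | h
  · exact absurd ⟨hb1, hc⟩ (not_under_over D hc.1)
  · exact absurd ⟨hb2, hc⟩ (not_under_over D hc.1)
  · exact Or.inl h
  · exact Or.inr h

lemma vspan_iff_nc {a b1 b2 : ℤ × ℤ} (hnc : ¬ D.IsCrossing a)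
    (hA1 : D.Adj a b1) (hA2 : D.Adj a b2)
    (hle : ht s(a, b1) ≤ ht s(a, b2))
    (hall : ∀ r, D.Adj a r → r = b1 ∨ r = b2) (z : ℤ) :
    vspan D ht a z ↔ ht s(a, b1) ≤ z ∧ z + 1 ≤ ht s(a, b2) := by
  constructor
  · rintro ⟨b, c, hb, hc, hbz, hcz, _⟩
    rcases hall b hb with rfl | rfl <;> rcases hall c hc with rfl | rfl <;>
      constructor <;> omega
  · rintro ⟨h1, h2⟩
    exact ⟨b1, b2, hA1, hA2, h1, h2, fun hcr => absurd hcr hnc⟩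

lemma vspan_iff_cross {a b1 b2 c1 c2 : ℤ × ℤ} (hc : D.IsCrossing a)
    (hb1 : D.UnderAt a b1) (hb2 : D.UnderAt a b2)
    (hc1 : D.OverAt a c1) (hc2 : D.OverAt a c2)
    (hule : ht s(a, b1) ≤ ht s(a, b2)) (hole : ht s(a, c1) ≤ ht s(a, c2))
    (hall : ∀ r, D.Adj a r → r = b1 ∨ r = b2 ∨ r = c1 ∨ r = c2) (z : ℤ) :
    vspan D ht a z ↔
      (ht s(a, b1) ≤ z ∧ z + 1 ≤ ht s(a, b2)) ∨
      (ht s(a, c1) ≤ z ∧ z + 1 ≤ ht s(a, c2)) := by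
  constructor
  · rintro ⟨b, c, hb, hcadj, hbz, hcz, hside⟩
    rcases hside hc with ⟨hub, huc⟩ | ⟨hob, hoc⟩
    · left
      rcases under_mem D hc1 hc2 hall hub with rfl | rfl <;>
        rcases under_mem D hc1 hc2 hall huc with rfl | rfl <;> constructor <;> omega
    · right
      rcases over_mem D hb1 hb2 hall hob with rfl | rfl <;>
        rcases over_mem D hb1 hb2 hall hoc with rfl | rfl <;> constructor <;> omega
  · rintro (⟨h1, h2⟩ | ⟨h1, h2⟩)
    · exact ⟨b1, b2, hb1.1, hb2.1, h1, h2, fun _ => Or.inl ⟨hb1, hb2⟩⟩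
    · exact ⟨c1, c2, hc1.1, hc2.1, h1, h2, fun _ => Or.inr ⟨hc1, hc2⟩⟩

lemma mem_nbhd (a : ℤ × ℤ) (h : ℤ) (r : (ℤ × ℤ) × ℤ) :
    linkAdj D ht (a, h) r ↔
      (D.Adj a r.1 ∧ r.2 = h ∧ ht s(a, r.1) = h) ∨
      (r = (a, h + 1) ∧ vspan D ht a h) ∨
      (r = (a, h - 1) ∧ vspan D ht a (h - 1)) := by
  constructor
  · rintro (⟨h1, h2, h3⟩ | ⟨h1, h2 | h2⟩)
    · exact Or.inl ⟨h2, h1.symm, h3⟩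
    · refine Or.inr (Or.inl ⟨?_, h2.2⟩)
      exact Prod.ext_iff.mpr ⟨h1.symm, h2.1⟩
    · refine Or.inr (Or.inr ⟨?_, ?_⟩)
      · exact Prod.ext_iff.mpr ⟨h1.symm, by omega⟩
      · have : r.2 = h - 1 := by omega
        rw [← this]; exact h2.2
  · rintro (⟨h1, h2, h3⟩ | ⟨rfl, h2⟩ | ⟨rfl, h2⟩)
    · exact Or.inl ⟨h2.symm, h1, h3⟩
    · exact Or.inr ⟨rfl, Or.inl ⟨rfl, h2⟩⟩
    · exact Or.inr ⟨rfl, Or.inr ⟨by omega, by simpa using h2⟩⟩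

lemma seg_count {a x1 x2 : ℤ × ℤ} (hA1 : D.Adj a x1) (hA2 : D.Adj a x2)
    (hne : x1 ≠ x2) {h : ℤ}
    (hm : ht s(a, x1) ≤ h) (hM : h ≤ ht s(a, x2))
    (Hhoriz : ∀ b, D.Adj a b → ht s(a, x1) ≤ ht s(a, b) → ht s(a, b) ≤ ht s(a, x2) →
      b = x1 ∨ b = x2)
    (Hspan : ∀ z, ht s(a, x1) - 1 ≤ z → z ≤ ht s(a, x2) →
      (vspan D ht a z ↔ ht s(a, x1) ≤ z ∧ z + 1 ≤ ht s(a, x2))) :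
    {r | linkAdj D ht (a, h) r}.ncard = 2 := by
  have hsU : vspan D ht a h ↔ ht s(a, x1) ≤ h ∧ h + 1 ≤ ht s(a, x2) :=
    Hspan h (by omega) (by omega)
  have hsD : vspan D ht a (h - 1) ↔ ht s(a, x1) ≤ h - 1 ∧ h ≤ ht s(a, x2) := by
    rw [Hspan (h - 1) (by omega) (by omega)]
    constructor <;> intro hh <;> omega
  rcases eq_or_lt_of_le hm with he1 | h1 <;> rcases eq_or_lt_of_le hM with he2 | h2
  · -- h = both endpoints
    have hset : {r | linkAdj D ht (a, h) r} = {(x1, h), (x2, h)} := by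
      ext r
      simp only [Set.mem_setOf_eq, Set.mem_insert_iff, Set.mem_singleton_iff]
      rw [mem_nbhd]
      constructor
      · rintro (⟨hb, hr2, hh⟩ | ⟨rfl, hsp⟩ | ⟨rfl, hsp⟩)
        · rcases Hhoriz r.1 hb (by omega) (by omega) with h' | h'
          · exact Or.inl (Prod.ext_iff.mpr ⟨h', hr2⟩)
          · exact Or.inr (Prod.ext_iff.mpr ⟨h', hr2⟩)
        · rw [hsU] at hsp; omega
        · rw [hsD] at hsp; omega
      · rintro (rfl | rfl)
        · exact Or.inl ⟨hA1, rfl, show ht s(a, x1) = h by omega⟩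
        · exact Or.inl ⟨hA2, rfl, show ht s(a, x2) = h by omega⟩
    rw [hset, Set.ncard_pair (fun hq => hne (congrArg Prod.fst hq))]
  · -- h = lower endpoint, strictly below upper
    have hset : {r | linkAdj D ht (a, h) r} = {(x1, h), (a, h + 1)} := by
      ext r
      simp only [Set.mem_setOf_eq, Set.mem_insert_iff, Set.mem_singleton_iff]
      rw [mem_nbhd]
      constructor
      · rintro (⟨hb, hr2, hh⟩ | ⟨rfl, hsp⟩ | ⟨rfl, hsp⟩)
        · rcases Hhoriz r.1 hb (by omega) (by omega) with h' | h'
          · exact Or.inl (Prod.ext_iff.mpr ⟨h', hr2⟩)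
          · rw [h'] at hh; omega
        · exact Or.inr rfl
        · rw [hsD] at hsp; omega
      · rintro (rfl | rfl)
        · exact Or.inl ⟨hA1, rfl, show ht s(a, x1) = h by omega⟩
        · exact Or.inr (Or.inl ⟨rfl, hsU.mpr (by omega)⟩)
    rw [hset, Set.ncard_pair (by
      simp only [ne_eq, Prod.mk.injEq, not_and]
      intro _
      omega)]
  · -- h = upper endpoint, strictly above lower
    have hset : {r | linkAdj D ht (a, h) r} = {(x2, h), (a, h - 1)} := by
      ext r
      simp only [Set.mem_setOf_eq, Set.mem_insert_iff, Set.mem_singleton_iff]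
      rw [mem_nbhd]
      constructor
      · rintro (⟨hb, hr2, hh⟩ | ⟨rfl, hsp⟩ | ⟨rfl, hsp⟩)
        · rcases Hhoriz r.1 hb (by omega) (by omega) with h' | h'
          · rw [h'] at hh; omega
          · exact Or.inl (Prod.ext_iff.mpr ⟨h', hr2⟩)
        · rw [hsU] at hsp; omega
        · exact Or.inr rfl
      · rintro (rfl | rfl)
        · exact Or.inl ⟨hA2, rfl, show ht s(a, x2) = h by omega⟩
        · exact Or.inr (Or.inr ⟨rfl, hsD.mpr (by omega)⟩)
    rw [hset, Set.ncard_pair (by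
      simp only [ne_eq, Prod.mk.injEq, not_and]
      intro _
      omega)]
  · -- strictly between
    have hset : {r | linkAdj D ht (a, h) r} = {(a, h + 1), (a, h - 1)} := by
      ext r
      simp only [Set.mem_setOf_eq, Set.mem_insert_iff, Set.mem_singleton_iff]
      rw [mem_nbhd]
      constructor
      · rintro (⟨hb, hr2, hh⟩ | ⟨rfl, hsp⟩ | ⟨rfl, hsp⟩)
        · rcases Hhoriz r.1 hb (by omega) (by omega) with h' | h' <;>
            · rw [h'] at hh; omega
        · exact Or.inl rfl
        · exact Or.inr rfl
      · rintro (rfl | rfl)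
        · exact Or.inr (Or.inl ⟨rfl, hsU.mpr (by omega)⟩)
        · exact Or.inr (Or.inr ⟨rfl, hsD.mpr (by omega)⟩)
    rw [hset, Set.ncard_pair (by
      simp only [ne_eq, Prod.mk.injEq, not_and]
      intro _
      omega)]


lemma vtx_bounds (a : ℤ × ℤ) (h : ℤ) (hv : ∃ q, linkAdj D ht (a, h) q) :
    ∃ b c, D.Adj a b ∧ D.Adj a c ∧ ht s(a, b) ≤ h ∧ h ≤ ht s(a, c) ∧
      (D.IsCrossing a →
        (D.UnderAt a b ∧ D.UnderAt a c) ∨ (D.OverAt a b ∧ D.OverAt a c)) := by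
  obtain ⟨q, hq⟩ := hv
  rw [mem_nbhd] at hq
  rcases hq with ⟨h1, h2, h3⟩ | ⟨_, hsp⟩ | ⟨_, hsp⟩
  · refine ⟨q.1, q.1, h1, h1, by omega, by omega, fun hcr => ?_⟩
    rcases under_or_over D h1 with h' | h'
    · exact Or.inl ⟨h', h'⟩
    · exact Or.inr ⟨h', h'⟩
  · obtain ⟨b, c, hb, hcadj, h1, h2, hside⟩ := hsp
    exact ⟨b, c, hb, hcadj, h1, by omega, hside⟩
  · obtain ⟨b, c, hb, hcadj, h1, h2, hside⟩ := hsp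
    exact ⟨b, c, hb, hcadj, by omega, by omega, hside⟩

lemma link_deg2 (Hht : ∀ e f, GammaEdge D e f → ht e < ht f)
    (p q : (ℤ × ℤ) × ℤ) (h : linkAdj D ht p q) :
    {r | linkAdj D ht p r}.ncard = 2 := by
  obtain ⟨a, h0⟩ := p
  obtain ⟨b, c, hb, hcadj, hbz, hcz, hside⟩ := vtx_bounds D ht a h0 ⟨q, h⟩
  by_cases hcr : D.IsCrossing a
  · obtain ⟨b1, b2, c1, c2, hb1, hb2, hc1, hc2, hbne, hcne, hule, hole, hall⟩ :=
      cross_data D ht a hcr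
    have hvs := vspan_iff_cross D ht hcr hb1 hb2 hc1 hc2 hule hole hall
    have hlt : ht s(a, b2) < ht s(a, c1) := under_lt_over D ht Hht hcr hb2 hc1
    rcases hside hcr with ⟨hub, huc⟩ | ⟨hob, hoc⟩
    · have hbm : ht s(a, b1) ≤ h0 := by
        rcases under_mem D hc1 hc2 hall hub with rfl | rfl <;> omega
      have hbM : h0 ≤ ht s(a, b2) := by
        rcases under_mem D hc1 hc2 hall huc with rfl | rfl <;> omega
      refine seg_count D ht hb1.1 hb2.1 hbne hbm hbM ?_ ?_
      · intro b' hb' hh1 hh2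
        rcases hall b' hb' with h' | h' | rfl | rfl
        · exact Or.inl h'
        · exact Or.inr h'
        · omega
        · have := under_lt_over D ht Hht hcr hb2 hc2
          omega
      · intro z hz1 hz2
        rw [hvs z]
        constructor
        · rintro (h' | h') <;> omega
        · exact Or.inl
    · have hom : ht s(a, c1) ≤ h0 := by
        rcases over_mem D hb1 hb2 hall hob with rfl | rfl <;> omega
      have hoM : h0 ≤ ht s(a, c2) := by
        rcases over_mem D hb1 hb2 hall hoc with rfl | rfl <;> omega
      refine seg_count D ht hc1.1 hc2.1 hcne hom hoM ?_ ?_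
      · intro b' hb' hh1 hh2
        rcases hall b' hb' with rfl | rfl | h' | h'
        · omega
        · omega
        · exact Or.inl h'
        · exact Or.inr h'
      · intro z hz1 hz2
        rw [hvs z]
        constructor
        · rintro (h' | h') <;> omega
        · exact Or.inr
  · obtain ⟨b1, b2, hA1, hA2, hbne, hle, hall⟩ := nc_data D ht a b hb hcr
    have hvs := vspan_iff_nc D ht hcr hA1 hA2 hle hall
    have hbm : ht s(a, b1) ≤ h0 := by
      rcases hall b hb with rfl | rfl <;> omega
    have hbM : h0 ≤ ht s(a, b2) := by
      rcases hall c hcadj with rfl | rfl <;> omega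
    refine seg_count D ht hA1 hA2 hbne hbm hbM ?_ ?_
    · intro b' hb' _ _
      exact hall b' hb'
    · intro z _ _
      exact hvs z

lemma fiber_step (a : ℤ × ℤ) (z z' : ℤ) :
    linkAdj D ht (a, z) (a, z') ↔
      (z' = z + 1 ∧ vspan D ht a z) ∨ (z = z' + 1 ∧ vspan D ht a z') := by
  constructor
  · rintro (⟨_, h2, _⟩ | ⟨_, h2⟩)
    · exact absurd rfl (adj_ne D h2)
    · exact h2
  · intro h'
    exact Or.inr ⟨rfl, h'⟩

lemma conn_up (a : ℤ × ℤ) (lo hi : ℤ)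
    (hspan : ∀ z, lo ≤ z → z + 1 ≤ hi → vspan D ht a z)
    {h : ℤ} (h1 : lo ≤ h) :
    ∀ h', h ≤ h' → h' ≤ hi →
      Relation.ReflTransGen (fun x y => linkAdj D ht (a, x) (a, y)) h h' := by
  refine Int.le_induction ?_ ?_
  · intro _; exact Relation.ReflTransGen.refl
  · intro n hn ih hbound
    exact Relation.ReflTransGen.tail (ih (by omega))
      (Or.inr ⟨rfl, Or.inl ⟨rfl, hspan n (by omega) hbound⟩⟩)

lemma conn_both (a : ℤ × ℤ) (lo hi : ℤ)
    (hspan : ∀ z, lo ≤ z → z + 1 ≤ hi → vspan D ht a z)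
    {h h' : ℤ} (h1 : lo ≤ h) (h2 : h ≤ hi) (h3 : lo ≤ h') (h4 : h' ≤ hi) :
    Relation.ReflTransGen (fun x y => linkAdj D ht (a, x) (a, y)) h h' := by
  rcases le_total h h' with hc | hc
  · exact conn_up D ht a lo hi hspan h1 h' hc h4
  · exact (@Relation.ReflTransGen.stdSymm _ _
      ⟨fun x y hxy => linkAdj_symm D ht _ _ hxy⟩).symm _ _ (conn_up D ht a lo hi hspan h3 h hc h2)

lemma conn_invariant (a : ℤ × ℤ) (lo hi : ℤ)
    (hbound : ∀ z, vspan D ht a z → (lo ≤ z ∧ z + 1 ≤ hi) ∨ z + 1 < lo ∨ hi < z)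
    {h h' : ℤ}
    (hc : Relation.ReflTransGen (fun x y => linkAdj D ht (a, x) (a, y)) h h')
    (h1 : lo ≤ h) (h2 : h ≤ hi) : lo ≤ h' ∧ h' ≤ hi := by
  induction hc with
  | refl => exact ⟨h1, h2⟩
  | tail _ hstep ih =>
    rw [fiber_step] at hstep
    obtain ⟨ih1, ih2⟩ := ih
    rcases hstep with ⟨he, hsp⟩ | ⟨he, hsp⟩ <;>
      rcases hbound _ hsp with ⟨q1, q2⟩ | hq | hq <;> omega

lemma backward_dir (Hht : ∀ e f, GammaEdge D e f → ht e < ht f) : Realizable D := by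
  refine ⟨⟨linkAdj D ht, linkAdj_symm D ht, linkAdj_unit D ht, link_deg2 D ht Hht⟩,
    ?_, ?_, ?_, ?_⟩
  · -- clause 1
    rintro p q (⟨h1, h2, h3⟩ | ⟨h1, h2 | h2⟩)
    · exact Or.inr h2
    · obtain ⟨b, c, hbadj, _, _, _, _⟩ := h2.2
      exact Or.inl ⟨h1, b, hbadj⟩
    · obtain ⟨b, c, hbadj, _, _, _, _⟩ := h2.2
      exact Or.inl ⟨h1, b, hbadj⟩
  · -- clause 2
    intro a b hab
    refine ⟨ht s(a, b), Or.inl ⟨rfl, hab, rfl⟩, ?_⟩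
    rintro h' (⟨_, _, h3⟩ | ⟨h1, _⟩)
    · exact h3.symm
    · exact absurd h1 (adj_ne D hab)
  · -- clause 3
    intro v hex hnc h h' hv hv'
    obtain ⟨b0, hb0⟩ := hex
    obtain ⟨b1, b2, hA1, hA2, hbne, hle, hall⟩ := nc_data D ht v b0 hb0 hnc
    have hspan : ∀ z, ht s(v, b1) ≤ z → z + 1 ≤ ht s(v, b2) → vspan D ht v z :=
      fun z hz1 hz2 => (vspan_iff_nc D ht hnc hA1 hA2 hle hall z).mpr ⟨hz1, hz2⟩
    have bounds : ∀ k : ℤ, (∃ q, linkAdj D ht (v, k) q) →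
        ht s(v, b1) ≤ k ∧ k ≤ ht s(v, b2) := by
      intro k hk
      obtain ⟨b, c, hb', hc', hk1, hk2, _⟩ := vtx_bounds D ht v k hk
      rcases hall b hb' with rfl | rfl <;> rcases hall c hc' with rfl | rfl <;>
        exact ⟨by omega, by omega⟩
    obtain ⟨q1, q2⟩ := bounds h hv
    obtain ⟨q3, q4⟩ := bounds h' hv'
    exact conn_both D ht v _ _ hspan q1 q2 q3 q4
  · -- clause 4
    intro v hcr
    obtain ⟨b1, b2, c1, c2, hb1, hb2, hc1, hc2, hbne, hcne, hule, hole, hall⟩ :=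
      cross_data D ht v hcr
    have hvs := vspan_iff_cross D ht hcr hb1 hb2 hc1 hc2 hule hole hall
    have hlt : ht s(v, b2) < ht s(v, c1) := under_lt_over D ht Hht hcr hb2 hc1
    have spanU : ∀ z, ht s(v, b1) ≤ z → z + 1 ≤ ht s(v, b2) → vspan D ht v z :=
      fun z hz1 hz2 => (hvs z).mpr (Or.inl ⟨hz1, hz2⟩)
    have spanO : ∀ z, ht s(v, c1) ≤ z → z + 1 ≤ ht s(v, c2) → vspan D ht v z :=
      fun z hz1 hz2 => (hvs z).mpr (Or.inr ⟨hz1, hz2⟩)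
    have invU : ∀ {h h' : ℤ},
        Relation.ReflTransGen (fun x y => linkAdj D ht (v, x) (v, y)) h h' →
        ht s(v, b1) ≤ h → h ≤ ht s(v, b2) →
        ht s(v, b1) ≤ h' ∧ h' ≤ ht s(v, b2) := by
      intro h h' hc' hq1 hq2
      refine conn_invariant D ht v _ _ ?_ hc' hq1 hq2
      intro z hz
      rcases (hvs z).mp hz with ⟨z1, z2⟩ | ⟨z1, z2⟩
      · exact Or.inl ⟨z1, z2⟩
      · right; right; omega
    have invO : ∀ {h h' : ℤ},
        Relation.ReflTransGen (fun x y => linkAdj D ht (v, x) (v, y)) h h' →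
        ht s(v, c1) ≤ h → h ≤ ht s(v, c2) →
        ht s(v, c1) ≤ h' ∧ h' ≤ ht s(v, c2) := by
      intro h h' hc' hq1 hq2
      refine conn_invariant D ht v _ _ ?_ hc' hq1 hq2
      intro z hz
      rcases (hvs z).mp hz with ⟨z1, z2⟩ | ⟨z1, z2⟩
      · right; left; omega
      · exact Or.inl ⟨z1, z2⟩
    refine ⟨ht s(v, b1), ht s(v, c1),
      ⟨(b1, ht s(v, b1)), Or.inl ⟨rfl, hb1.1, rfl⟩⟩,
      ⟨(c1, ht s(v, c1)), Or.inl ⟨rfl, hc1.1, rfl⟩⟩, ?_, ?_, ?_, ?_⟩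
    · intro hcon
      have := invU hcon (le_refl _) hule
      omega
    · intro h hv
      obtain ⟨b, c, hb', hc', hk1, hk2, hside⟩ := vtx_bounds D ht v h hv
      rcases hside hcr with ⟨hub, huc⟩ | ⟨hob, hoc⟩
      · have e1 : ht s(v, b1) ≤ h := by
          rcases under_mem D hc1 hc2 hall hub with rfl | rfl <;> omega
        have e2 : h ≤ ht s(v, b2) := by
          rcases under_mem D hc1 hc2 hall huc with rfl | rfl <;> omega
        exact Or.inl (conn_both D ht v _ _ spanU e1 e2 (le_refl _) hule)
      · have e1 : ht s(v, c1) ≤ h := by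
          rcases over_mem D hb1 hb2 hall hob with rfl | rfl <;> omega
        have e2 : h ≤ ht s(v, c2) := by
          rcases over_mem D hb1 hb2 hall hoc with rfl | rfl <;> omega
        exact Or.inr (conn_both D ht v _ _ spanO e1 e2 (le_refl _) hole)
    · intro h h' hcu hco
      have q1 := invU hcu (le_refl _) hule
      have q2 := invO hco (le_refl _) hole
      omega
    · intro p h hadj
      rcases (mem_nbhd D ht v h (p, h)).mp hadj with ⟨hb', _, hh⟩ | ⟨heq, _⟩ | ⟨heq, _⟩
      · have hh' : ht s(v, p) = h := hh
        clear hh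
        constructor
        · intro hov
          have e1 : ht s(v, c1) ≤ h ∧ h ≤ ht s(v, c2) := by
            rcases over_mem D hb1 hb2 hall hov with rfl | rfl <;> exact ⟨by omega, by omega⟩
          exact conn_both D ht v _ _ spanO e1.1 e1.2 (le_refl _) hole
        · intro hun
          have e1 : ht s(v, b1) ≤ h ∧ h ≤ ht s(v, b2) := by
            rcases under_mem D hc1 hc2 hall hun with rfl | rfl <;> exact ⟨by omega, by omega⟩
          exact conn_both D ht v _ _ spanU e1.1 e1.2 (le_refl _) hule
      · have h2 : h = h + 1 := congrArg Prod.snd heq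
        omega
      · have h2 : h = h - 1 := congrArg Prod.snd heq
        omega

end Construction



/-- A lattice diagram is realizable as the projection of a lattice link iff
its associated digraph admits a height function. -/
theorem stmt_12 (D : LatticeDiagram) :
    Realizable D ↔
      ∃ ht : Sym2 (ℤ × ℤ) → ℤ, ∀ e f, GammaEdge D e f → ht e < ht f := by
  constructor
  · exact forward_dir D
  · rintro ⟨ht, Hht⟩
    exact backward_dir D ht Hht
end

section
/- Let v₁v₂v₃v₄ be a unit 4-cycle in ℤ². If in a lattice diagram each vertex vᵢ is a crossing and the cyclic pattern of crossings is such that edge vᵢvᵢ₊₁ is an understrand at vᵢ and an overstrand at vᵢ₊₁ for all i mod 4 (an Escher square), then the associated digraph contains the directed 4-cycle e₁→e₂→e₃→e₄→e₁ where eᵢ = vᵢvᵢ₊₁; consequently the diagram is not realizable. -/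
/-- If `v₁v₂v₃v₄` is a unit 4-cycle in a lattice diagram all of whose vertices
are crossings, with each edge `vᵢvᵢ₊₁` an understrand at `vᵢ` and an
overstrand at `vᵢ₊₁` (an Escher square), then the associated digraph contains
the directed 4-cycle on the edges `eᵢ = vᵢvᵢ₊₁` (namely `eᵢ₊₁ → eᵢ` for all
`i` mod 4, since `eᵢ₊₁` is the understrand and `eᵢ` the overstrand at the
crossing `vᵢ₊₁`); consequently the diagram is not realizable. -/
theorem stmt_15 (D : LatticeDiagram) (v : Fin 4 → ℤ × ℤ)
    (hinj : Function.Injective v)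
    (hadj : ∀ i, D.Adj (v i) (v (i + 1)))
    (hcross : ∀ i, D.IsCrossing (v i))
    (hpat : ∀ i, D.UnderAt (v i) (v (i + 1)) ∧ D.OverAt (v (i + 1)) (v i)) :
    (∀ i : Fin 4, GammaEdge D s(v (i + 1), v (i + 2)) s(v i, v (i + 1))) ∧
      ¬ Realizable D := by
  have fcsymm : ∀ (L : LatticeLink) (w : ℤ × ℤ) {a b : ℤ},
      FiberConn L w a b → FiberConn L w b a := fun L w a b h =>
    by
      haveI : Std.Symm (fun a b : ℤ => L.Adj (w, a) (w, b)) := ⟨fun x y hxy => L.symm _ _ hxy⟩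
      exact (Relation.ReflTransGen.symmetric).symm _ _ h
  constructor
  · intro i
    have e12 : i + 1 + 1 = i + 2 := by rw [add_assoc]; rfl
    exact ⟨v (i + 1), v (i + 1 + 1), v i, hcross (i + 1), (hpat (i + 1)).1, (hpat i).2,
      by rw [e12], Sym2.eq_swap⟩
  · rintro ⟨L, hE, huniq, hdeg2, hcr⟩
    choose h hh _ using fun i : Fin 4 => huniq (v i) (v (i + 1)) (hadj i)
    have key : ∀ i : Fin 4, h (i + 1) < h i := by
      intro i
      obtain ⟨hu, ho, -, -, -, -, hord, hatt⟩ := hcr (v (i + 1)) (hcross (i + 1))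
      have h1 := (hatt (v (i + 1 + 1)) (h (i + 1)) (hh (i + 1))).2 (hpat (i + 1)).1
      have h2 := (hatt (v i) (h i) (L.symm _ _ (hh i))).1 (hpat i).2
      exact hord _ _ (fcsymm L _ h1) (fcsymm L _ h2)
    have k0 := key 0
    have k1 := key 1
    have k2 := key 2
    have k3 := key 3
    have e3 : (3 + 1 : Fin 4) = 0 := rfl
    rw [e3] at k3
    have e0 : (0 + 1 : Fin 4) = 1 := rfl
    have e1 : (1 + 1 : Fin 4) = 2 := rfl
    have e2 : (2 + 1 : Fin 4) = 3 := rfl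
    rw [e0] at k0; rw [e1] at k1; rw [e2] at k2
    omega
end
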